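/- Let a > 0, b ≠ 0, d ∈ ℝ, and c > max(d, 0). The function φ(y) = (6(c-d)/b) · 1/(1 - cosh(√((c-d)/(ac)) · y)) is a solution of the ODE a c φ''' + b φ φ' + (d - c) φ' = 0 on ℝ \ {0}. -/

import Mathlib

open Real

private lemma bbm_cosh_ne (k : ℝ) (hk : k ≠ 0) (z : ℝ) (hz : z ≠ 0) :
    1 - Real.cosh (k * z) ≠ 0 := by
  have h1 : 1 < Real.cosh (k * z) := Real.one_lt_cosh.mpr (mul_ne_zero hk hz)
  linarith

private lemma bbm_hcosh (k z : ℝ) :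
    HasDerivAt (fun w => Real.cosh (k * w)) (Real.sinh (k * z) * k) z := by
  have h := (Real.hasDerivAt_cosh (k * z)).comp z ((hasDerivAt_id z).const_mul k)
  simpa [Function.comp_def] using h

private lemma bbm_hsinh (k z : ℝ) :
    HasDerivAt (fun w => Real.sinh (k * w)) (Real.cosh (k * z) * k) z := by
  have h := (Real.hasDerivAt_sinh (k * z)).comp z ((hasDerivAt_id z).const_mul k)
  simpa [Function.comp_def] using h

private lemma bbm_h1 (A k : ℝ) (hk : k ≠ 0) (z : ℝ) (hz : z ≠ 0) :
    HasDerivAt (fun w => A * (1 / (1 - Real.cosh (k * w))))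
      (A * k * Real.sinh (k * z) / (1 - Real.cosh (k * z)) ^ 2) z := by
  have hu := bbm_cosh_ne k hk z hz
  have hD : HasDerivAt (fun w => 1 - Real.cosh (k * w)) (-(Real.sinh (k * z) * k)) z :=
    (bbm_hcosh k z).const_sub 1
  have h := (hD.inv hu).const_mul A
  have heq : (fun w => A * (1 / (1 - Real.cosh (k * w))))
      = fun w => A * (1 - Real.cosh (k * w))⁻¹ := by
    funext w; rw [one_div]
  rw [heq]
  refine h.congr_deriv (Eq.symm ?_)
  field_simp

private lemma bbm_h2 (A k : ℝ) (hk : k ≠ 0) (z : ℝ) (hz : z ≠ 0) :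
    HasDerivAt (fun w => A * k * Real.sinh (k * w) / (1 - Real.cosh (k * w)) ^ 2)
      (-(A * k ^ 2 * (Real.cosh (k * z) + 2) / (1 - Real.cosh (k * z)) ^ 2)) z := by
  have hu := bbm_cosh_ne k hk z hz
  have hD : HasDerivAt (fun w => 1 - Real.cosh (k * w)) (-(Real.sinh (k * z) * k)) z :=
    (bbm_hcosh k z).const_sub 1
  have hnum : HasDerivAt (fun w => A * k * Real.sinh (k * w))
      (A * k * (Real.cosh (k * z) * k)) z := (bbm_hsinh k z).const_mul (A * k)
  have hden : HasDerivAt (fun w => (1 - Real.cosh (k * w)) ^ 2)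
      (2 * (1 - Real.cosh (k * z)) ^ 1 * (-(Real.sinh (k * z) * k))) z := hD.pow 2
  have hden0 : (1 - Real.cosh (k * z)) ^ 2 ≠ 0 := pow_ne_zero _ hu
  have h := hnum.div hden hden0
  refine h.congr_deriv (Eq.symm ?_)
  have hs : Real.sinh (k * z) ^ 2 = Real.cosh (k * z) ^ 2 - 1 := Real.sinh_sq (k * z)
  field_simp
  linear_combination (-(2 * A)) * hs

private lemma bbm_h3 (A k : ℝ) (hk : k ≠ 0) (z : ℝ) (hz : z ≠ 0) :
    HasDerivAt (fun w => -(A * k ^ 2 * (Real.cosh (k * w) + 2) / (1 - Real.cosh (k * w)) ^ 2))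
      (-(A * k ^ 3 * Real.sinh (k * z) * (Real.cosh (k * z) + 5) /
        (1 - Real.cosh (k * z)) ^ 3)) z := by
  have hu := bbm_cosh_ne k hk z hz
  have hD : HasDerivAt (fun w => 1 - Real.cosh (k * w)) (-(Real.sinh (k * z) * k)) z :=
    (bbm_hcosh k z).const_sub 1
  have hnum : HasDerivAt (fun w => A * k ^ 2 * (Real.cosh (k * w) + 2))
      (A * k ^ 2 * (Real.sinh (k * z) * k)) z := ((bbm_hcosh k z).add_const 2).const_mul (A * k ^ 2)
  have hden : HasDerivAt (fun w => (1 - Real.cosh (k * w)) ^ 2)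
      (2 * (1 - Real.cosh (k * z)) ^ 1 * (-(Real.sinh (k * z) * k))) z := hD.pow 2
  have hden0 : (1 - Real.cosh (k * z)) ^ 2 ≠ 0 := pow_ne_zero _ hu
  have h := (hnum.div hden hden0).neg
  refine h.congr_deriv (Eq.symm ?_)
  field_simp
  ring

private lemma bbm_deriv1 (A k : ℝ) (hk : k ≠ 0) (z : ℝ) (hz : z ≠ 0) :
    deriv (fun w => A * (1 / (1 - Real.cosh (k * w)))) z
      = A * k * Real.sinh (k * z) / (1 - Real.cosh (k * z)) ^ 2 :=
  (bbm_h1 A k hk z hz).deriv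

private lemma bbm_iter3 (A k : ℝ) (hk : k ≠ 0) (y : ℝ) (hy : y ≠ 0) :
    iteratedDeriv 3 (fun w => A * (1 / (1 - Real.cosh (k * w)))) y
      = -(A * k ^ 3 * Real.sinh (k * y) * (Real.cosh (k * y) + 5) /
        (1 - Real.cosh (k * y)) ^ 3) := by
  have hd2 : ∀ z : ℝ, z ≠ 0 →
      deriv (deriv (fun w => A * (1 / (1 - Real.cosh (k * w))))) z
        = -(A * k ^ 2 * (Real.cosh (k * z) + 2) / (1 - Real.cosh (k * z)) ^ 2) := by
    intro z hz
    have hev : deriv (fun w => A * (1 / (1 - Real.cosh (k * w))))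
        =ᶠ[nhds z] fun w => A * k * Real.sinh (k * w) / (1 - Real.cosh (k * w)) ^ 2 := by
      filter_upwards [eventually_ne_nhds hz] with w hw
      exact bbm_deriv1 A k hk w hw
    rw [hev.deriv_eq]
    exact (bbm_h2 A k hk z hz).deriv
  have hd3 : deriv (deriv (deriv (fun w => A * (1 / (1 - Real.cosh (k * w)))))) y
      = -(A * k ^ 3 * Real.sinh (k * y) * (Real.cosh (k * y) + 5) /
        (1 - Real.cosh (k * y)) ^ 3) := by
    have hev : deriv (deriv (fun w => A * (1 / (1 - Real.cosh (k * w)))))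
        =ᶠ[nhds y] fun w => -(A * k ^ 2 * (Real.cosh (k * w) + 2) / (1 - Real.cosh (k * w)) ^ 2) := by
      filter_upwards [eventually_ne_nhds hy] with w hw
      exact hd2 w hw
    rw [hev.deriv_eq]
    exact (bbm_h3 A k hk y hy).deriv
  have h32 : iteratedDeriv 3 (fun w => A * (1 / (1 - Real.cosh (k * w))))
      = deriv (deriv (deriv (fun w => A * (1 / (1 - Real.cosh (k * w)))))) := by
    simp only [show (3 : ℕ) = 1 + 1 + 1 from rfl, iteratedDeriv_succ, iteratedDeriv_one, iteratedDeriv_zero]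
  rw [h32]
  exact hd3

theorem bbm_singular_solitary_wave (a b c d : ℝ) (ha : 0 < a) (hb : b ≠ 0)
    (hcd : d < c) (hc : 0 < c) :
    let φ : ℝ → ℝ := fun y => (6 * (c - d) / b) * (1 / (1 - Real.cosh (Real.sqrt ((c - d) / (a * c)) * y)))
    ∀ y : ℝ, y ≠ 0 →
      a * c * iteratedDeriv 3 φ y + b * φ y * deriv φ y + (d - c) * deriv φ y = 0 := by
  intro φ y hy
  have hφ : φ = fun w => (6 * (c - d) / b) *
      (1 / (1 - Real.cosh (Real.sqrt ((c - d) / (a * c)) * w))) := rfl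
  obtain ⟨k, hkdef⟩ : ∃ k, k = Real.sqrt ((c - d) / (a * c)) := ⟨_, rfl⟩
  obtain ⟨A, hAdef⟩ : ∃ A, A = 6 * (c - d) / b := ⟨_, rfl⟩
  have hk2 : k ^ 2 = (c - d) / (a * c) := by
    rw [hkdef]
    exact Real.sq_sqrt (div_nonneg (by linarith) (by positivity))
  have hkpos : 0 < k := by
    rw [hkdef]
    exact Real.sqrt_pos.mpr (div_pos (by linarith) (by positivity))
  have hack : a * c * k ^ 2 = c - d := by
    rw [hk2]; field_simp
  have hAb : b * A = 6 * (c - d) := by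
    rw [hAdef]; field_simp
  have hφ' : φ = fun w => A * (1 / (1 - Real.cosh (k * w))) := by
    subst hkdef; subst hAdef; rfl
  rw [hφ', bbm_iter3 A k hkpos.ne' y hy, bbm_deriv1 A k hkpos.ne' y hy]
  have hu : 1 - Real.cosh (k * y) ≠ 0 := bbm_cosh_ne k hkpos.ne' y hy
  have key : -(a * c * k ^ 2) * (Real.cosh (k * y) + 5) + b * A
      + (d - c) * (1 - Real.cosh (k * y)) = 0 := by
    linear_combination (-(Real.cosh (k * y) + 5)) * hack + hAb
  have hmain : a * c * -(A * k ^ 3 * Real.sinh (k * y) * (Real.cosh (k * y) + 5) /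
        (1 - Real.cosh (k * y)) ^ 3)
      + b * (A * (1 / (1 - Real.cosh (k * y))))
        * (A * k * Real.sinh (k * y) / (1 - Real.cosh (k * y)) ^ 2)
      + (d - c) * (A * k * Real.sinh (k * y) / (1 - Real.cosh (k * y)) ^ 2)
      = (A * k * Real.sinh (k * y) / (1 - Real.cosh (k * y)) ^ 3)
        * (-(a * c * k ^ 2) * (Real.cosh (k * y) + 5) + b * A
          + (d - c) * (1 - Real.cosh (k * y))) := by
    field_simp
  rw [hmain, key, mul_zero]
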